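/- arXiv:1508.03248 — 2 statements merged into one kernel-verified Lean document; each statement's English description precedes it below -/
import Mathlib

section
/- Let A, β, γ be real numbers with 0 < A, 0 < β, 0 < γ and A + 2β + 2γ < π. Let a, b, c, u, U, v, V, p, q be positive real numbers with b = u + U and c = v + V, satisfying the hyperbolic law-of-sines relations: sinh a / sin A = sinh b / sin(2β) = sinh c / sin(2γ); sinh q / sin(2β) = sinh V / sin γ; sinh q / sin A = sinh v / sin γ; sinh p / sin(2γ) = sinh U / sin β; and sinh p / sin A = sinh u / sin β. If p = q, then β = γ. (This is the trigonometric content of the Steiner–Lehmus theorem in hyperbolic geometry: in a hyperbolic triangle ABC with angles A, B = 2β, C = 2γ, opposite side lengths a, b, c, internal bisector BB' of length p dividing side AC as b = u + U with u = AB', U = B'C, and internal bisector CC' of length q dividing side AB as c = v + V with v = AC', V = C'B, equality of the two internal bisectors forces the triangle to be isosceles.) -/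
open Real

set_option maxHeartbeats 1000000

lemma steiner_lehmus_aux (β γ SA s u U v V : ℝ)
    (hβ : 0 < β) (hβγ : β < γ) (hsum2 : β + γ < π / 2)
    (hSA : 0 < SA) (hs : 0 < s)
    (hu : 0 < u) (hU : 0 < U) (hv : 0 < v) (hV : 0 < V)
    (e1 : Real.sinh u * SA = s * Real.sin β)
    (e2 : Real.sinh U * (2 * Real.sin γ * Real.cos γ) = s * Real.sin β)
    (e3 : Real.sinh v * SA = s * Real.sin γ)
    (e4 : Real.sinh V * (2 * Real.sin β * Real.cos β) = s * Real.sin γ)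
    (E : Real.sin β * (2 * Real.sin γ * Real.cos γ) * Real.cosh U
          + SA * Real.sin β * Real.cosh u
        = Real.sin γ * (2 * Real.sin β * Real.cos β) * Real.cosh V
          + SA * Real.sin γ * Real.cosh v) : False := by
  have hγ : 0 < γ := hβ.trans hβγ
  have hγ2 : γ < π / 2 := by linarith
  have hpi := Real.pi_pos
  have hsβ : 0 < Real.sin β := Real.sin_pos_of_pos_of_lt_pi hβ (by linarith)
  have hsγ : 0 < Real.sin γ := Real.sin_pos_of_pos_of_lt_pi hγ (by linarith)
  have hcβ : 0 < Real.cos β := Real.cos_pos_of_mem_Ioo ⟨by linarith, by linarith⟩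
  have hcγ : 0 < Real.cos γ := Real.cos_pos_of_mem_Ioo ⟨by linarith, by linarith⟩
  have hss : Real.sin β < Real.sin γ :=
    Real.sin_lt_sin_of_lt_of_le_pi_div_two (by linarith) (le_of_lt hγ2) hβγ
  have hcc : Real.cos γ < Real.cos β :=
    Real.cos_lt_cos_of_nonneg_of_le_pi (le_of_lt hβ) (by linarith) hβγ
  have hmix : Real.sin β * Real.sin γ < Real.cos β * Real.cos γ := by
    have h0 : 0 < Real.cos (β + γ) := Real.cos_pos_of_mem_Ioo ⟨by linarith, hsum2⟩
    rw [Real.cos_add] at h0; linarith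
  have pb : Real.sin β ^ 2 + Real.cos β ^ 2 = 1 := Real.sin_sq_add_cos_sq β
  have pg : Real.sin γ ^ 2 + Real.cos γ ^ 2 = 1 := Real.sin_sq_add_cos_sq γ
  have hpos : Real.sin β ^ 2 < Real.cos γ * (Real.cos β + Real.cos γ) := by
    nlinarith [sq_nonneg (Real.cos γ)]
  have hid : Real.sin γ ^ 2 * Real.cos γ - Real.sin β ^ 2 * Real.cos β
      = (Real.cos β - Real.cos γ) * (Real.cos γ * (Real.cos β + Real.cos γ) - Real.sin β ^ 2) := by
    linear_combination Real.cos γ * pg - Real.cos γ * pb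
  have hscc : Real.sin β ^ 2 * Real.cos β < Real.sin γ ^ 2 * Real.cos γ := by
    nlinarith [mul_pos (sub_pos.2 hcc) (sub_pos.2 hpos)]
  -- sinh u < sinh v
  have huv : Real.sinh u < Real.sinh v := by
    have h6 : Real.sinh u * SA < Real.sinh v * SA := by
      rw [e1, e3]; exact mul_lt_mul_of_pos_left hss hs
    exact lt_of_mul_lt_mul_right h6 hSA.le
  have hcuv : Real.cosh u < Real.cosh v := by
    rw [Real.cosh_lt_cosh, abs_of_pos hu, abs_of_pos hv]
    rwa [Real.sinh_lt_sinh] at huv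
  -- sinh U < sinh V
  have hQ : 0 < 2 * Real.sin γ * Real.cos γ := by positivity
  have hP : 0 < 2 * Real.sin β * Real.cos β := by positivity
  have hUV : Real.sinh U < Real.sinh V := by
    have eU : Real.sinh U = s * Real.sin β / (2 * Real.sin γ * Real.cos γ) :=
      eq_div_of_mul_eq hQ.ne' e2
    have eV : Real.sinh V = s * Real.sin γ / (2 * Real.sin β * Real.cos β) :=
      eq_div_of_mul_eq hP.ne' e4
    rw [eU, eV, div_lt_div_iff₀ hQ hP]
    nlinarith [mul_lt_mul_of_pos_left hscc hs]
  have hcUV : Real.cosh U < Real.cosh V := by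
    rw [Real.cosh_lt_cosh, abs_of_pos hU, abs_of_pos hV]
    rwa [Real.sinh_lt_sinh] at hUV
  have hL : Real.cos γ * Real.cosh U < Real.cos β * Real.cosh V :=
    mul_lt_mul hcc hcUV.le (Real.cosh_pos _) hcβ.le
  have hR : Real.sin β * Real.cosh u < Real.sin γ * Real.cosh v :=
    mul_lt_mul hss hcuv.le (Real.cosh_pos _) hsγ.le
  nlinarith [mul_pos hsβ hsγ, mul_lt_mul_of_pos_left hL (mul_pos hsβ hsγ),
    mul_lt_mul_of_pos_left hR hSA]

theorem steiner_lehmus_hyperbolic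
    (A β γ : ℝ) (hA : 0 < A) (hβ : 0 < β) (hγ : 0 < γ)
    (hsum : A + 2 * β + 2 * γ < π)
    (a b c u U v V p q : ℝ)
    (ha : 0 < a) (hb : 0 < b) (hc : 0 < c)
    (hu : 0 < u) (hU : 0 < U) (hv : 0 < v) (hV : 0 < V)
    (hp : 0 < p) (hq : 0 < q)
    (hbuU : b = u + U) (hcvV : c = v + V)
    (h1 : sinh a / sin A = sinh b / sin (2 * β))
    (h1' : sinh b / sin (2 * β) = sinh c / sin (2 * γ))
    (h2 : sinh q / sin (2 * β) = sinh V / sin γ)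
    (h3 : sinh q / sin A = sinh v / sin γ)
    (h4 : sinh p / sin (2 * γ) = sinh U / sin β)
    (h5 : sinh p / sin A = sinh u / sin β)
    (hpq : p = q) :
    β = γ := by
  subst hpq
  subst hbuU
  subst hcvV
  have hpi := Real.pi_pos
  have hsum2 : β + γ < π / 2 := by linarith
  have hsA : 0 < sin A := Real.sin_pos_of_pos_of_lt_pi hA (by linarith)
  have hsβ : 0 < sin β := Real.sin_pos_of_pos_of_lt_pi hβ (by linarith)
  have hsγ : 0 < sin γ := Real.sin_pos_of_pos_of_lt_pi hγ (by linarith)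
  have hcβ : 0 < cos β := Real.cos_pos_of_mem_Ioo ⟨by linarith, by linarith⟩
  have hcγ : 0 < cos γ := Real.cos_pos_of_mem_Ioo ⟨by linarith, by linarith⟩
  have hs2β : 0 < sin (2 * β) := by rw [Real.sin_two_mul]; positivity
  have hs2γ : 0 < sin (2 * γ) := by rw [Real.sin_two_mul]; positivity
  have hs : 0 < sinh p := Real.sinh_pos_iff.2 hp
  set s := sinh p with hsdef
  have e1 : sinh u * sin A = s * sin β := by
    field_simp at h5; linarith
  have e2 : sinh U * (2 * sin γ * cos γ) = s * sin β := by
    rw [← Real.sin_two_mul]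
    field_simp at h4; linarith
  have e3 : sinh v * sin A = s * sin γ := by
    field_simp at h3; linarith
  have e4 : sinh V * (2 * sin β * cos β) = s * sin γ := by
    rw [← Real.sin_two_mul]
    field_simp at h2; linarith
  have hbc : (sinh u * cosh U + cosh u * sinh U) * (2 * sin γ * cos γ)
      = (sinh v * cosh V + cosh v * sinh V) * (2 * sin β * cos β) := by
    rw [div_eq_div_iff hs2β.ne' hs2γ.ne'] at h1'
    rw [Real.sinh_add, Real.sinh_add] at h1'
    rw [← Real.sin_two_mul, ← Real.sin_two_mul]
    linarith
  have E : s * (sin β * (2 * sin γ * cos γ) * cosh U + sin A * sin β * cosh u)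
      = s * (sin γ * (2 * sin β * cos β) * cosh V + sin A * sin γ * cosh v) := by
    linear_combination sin A * hbc - (2 * sin γ * cos γ) * cosh U * e1
      - sin A * cosh u * e2 + (2 * sin β * cos β) * cosh V * e3
      + sin A * cosh v * e4
  have E' : sin β * (2 * sin γ * cos γ) * cosh U + sin A * sin β * cosh u
      = sin γ * (2 * sin β * cos β) * cosh V + sin A * sin γ * cosh v :=
    mul_left_cancel₀ hs.ne' E
  rcases lt_trichotomy β γ with h | h | h
  · exact absurd E' (by
      intro _
      exact steiner_lehmus_aux β γ (sin A) s u U v V hβ h hsum2 hsA hs hu hU hv hV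
        e1 e2 e3 e4 E')
  · exact h
  · exact absurd E' (by
      intro _
      exact steiner_lehmus_aux γ β (sin A) s v V u U hγ h (by linarith) hsA hs hv hV hu hU
        e3 e4 e1 e2 E'.symm)
end

section
/- Let A, β, γ be real numbers with 0 < A, 0 < β < γ and A + 2β + 2γ < π, and let b, c, u, v, p, q be positive real numbers satisfying: sinh b / sin(2β) = sinh c / sin(2γ); sinh q / sin A = sinh v / sin γ; and sinh p / sin A = sinh u / sin β. If p = q, then (sinh b / sinh u) / (sinh c / sinh v) = cos β / cos γ, and consequently sinh b / sinh u > sinh c / sinh v. -/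
open Real

theorem ratio_cos
    (A β γ : ℝ) (hA : 0 < A) (hβ : 0 < β) (hβγ : β < γ)
    (hsum : A + 2 * β + 2 * γ < π)
    (b c u v p q : ℝ)
    (hb : 0 < b) (hc : 0 < c) (hu : 0 < u) (hv : 0 < v)
    (hp : 0 < p) (hq : 0 < q)
    (h1 : sinh b / sin (2 * β) = sinh c / sin (2 * γ))
    (h3 : sinh q / sin A = sinh v / sin γ)
    (h5 : sinh p / sin A = sinh u / sin β)
    (hpq : p = q) :
    (sinh b / sinh u) / (sinh c / sinh v) = cos β / cos γ ∧
      sinh c / sinh v < sinh b / sinh u := by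
  have hγ : 0 < γ := hβ.trans hβγ
  have hγπ : γ < π / 2 := by nlinarith
  have hβπ : β < π / 2 := hβγ.trans hγπ
  have hAπ : A < π := by nlinarith
  have hsA : 0 < sin A := sin_pos_of_pos_of_lt_pi hA hAπ
  have hsβ : 0 < sin β := sin_pos_of_pos_of_lt_pi hβ (by linarith [pi_pos])
  have hsγ : 0 < sin γ := sin_pos_of_pos_of_lt_pi hγ (by linarith [pi_pos])
  have hcβ : 0 < cos β := cos_pos_of_mem_Ioo ⟨by linarith, hβπ⟩
  have hcγ : 0 < cos γ := cos_pos_of_mem_Ioo ⟨by linarith, hγπ⟩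
  have hcβγ : cos γ < cos β := by
    apply cos_lt_cos_of_nonneg_of_le_pi (le_of_lt hβ) (by linarith) hβγ
  have hs2β : 0 < sin (2 * β) := sin_pos_of_pos_of_lt_pi (by linarith) (by nlinarith)
  have hs2γ : 0 < sin (2 * γ) := sin_pos_of_pos_of_lt_pi (by linarith) (by nlinarith)
  have hshb : 0 < sinh b := sinh_pos_iff.2 hb
  have hshc : 0 < sinh c := sinh_pos_iff.2 hc
  have hshu : 0 < sinh u := sinh_pos_iff.2 hu
  have hshv : 0 < sinh v := sinh_pos_iff.2 hv
  subst hpq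
  have huv : sinh u * sin γ = sinh v * sin β := by
    rw [h5] at h3
    field_simp at h3
    linarith
  have hbc : sinh b * sin (2 * γ) = sinh c * sin (2 * β) := by
    field_simp at h1
    linarith
  have key : (sinh b / sinh u) / (sinh c / sinh v) = cos β / cos γ := by
    rw [sin_two_mul, sin_two_mul] at hbc
    have e2 : sinh b * sinh v * cos γ = cos β * (sinh u * sinh c) :=
      mul_right_cancel₀ (show (2 * sin β * sin γ) ≠ 0 by positivity)
        (by linear_combination (sinh v * sin β) * hbc - (2 * sin β * cos β * sinh c) * huv)
    field_simp
    linear_combination e2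
  refine ⟨key, ?_⟩
  have h0 : 0 < sinh c / sinh v := div_pos hshc hshv
  have : 1 < cos β / cos γ := (one_lt_div hcγ).2 hcβγ
  calc sinh c / sinh v = sinh c / sinh v * 1 := by ring
    _ < sinh c / sinh v * (cos β / cos γ) := by
        exact mul_lt_mul_of_pos_left this h0
    _ = sinh b / sinh u := by
        rw [← key]; field_simp
end
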